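/- Let F(T), G(T) ∈ ℤ[T] be monic polynomials coprime over ℚ, and let d be a generator of the ideal (F(T), G(T)) ∩ ℤ of ℤ (taken positive). Then d divides Res(F, G), and a prime p divides d if and only if p divides Res(F, G). -/

import Mathlib

open Polynomial

lemma dvd_algebraMap_norm' {R S : Type*} [CommRing R] [CommRing S] [Algebra R S]
    [Module.Free R S] [Module.Finite R S] (x : S) :
    x ∣ algebraMap R S (Algebra.norm R x) := by
  classical
  set f := Algebra.lmul R S x with hf
  have hch : aeval x (LinearMap.charpoly f) = 0 := by
    have h1 : aeval f (LinearMap.charpoly f) = 0 := LinearMap.aeval_self_charpoly f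
    have h2 : aeval f (LinearMap.charpoly f)
        = Algebra.lmul R S (aeval x (LinearMap.charpoly f)) :=
      (Polynomial.aeval_algHom_apply (Algebra.lmul R S) x (LinearMap.charpoly f))
    have := congrArg (fun g => g 1) (h2.symm.trans h1)
    simpa using this
  have hdet : Algebra.norm R x
      = (-1) ^ Module.finrank R S * (LinearMap.charpoly f).coeff 0 := by
    rw [Algebra.norm_apply, LinearMap.det_eq_sign_charpoly_coeff]
  have hsplit : (LinearMap.charpoly f).divX * X + C ((LinearMap.charpoly f).coeff 0)
      = LinearMap.charpoly f := Polynomial.divX_mul_X_add _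
  have : aeval x ((LinearMap.charpoly f).divX) * x
      + algebraMap R S ((LinearMap.charpoly f).coeff 0) = 0 := by
    have := congrArg (aeval x) hsplit
    simpa [map_add, map_mul, aeval_X, aeval_C] using this.trans hch
  have hdvd0 : x ∣ algebraMap R S ((LinearMap.charpoly f).coeff 0) := by
    refine ⟨-(aeval x ((LinearMap.charpoly f).divX)), ?_⟩
    linear_combination this
  rw [hdet, map_mul]
  exact Dvd.dvd.mul_left hdvd0 _

lemma norm_mk_map {R S : Type*} [CommRing R] [CommRing S] [Nontrivial S] (φ : R →+* S)
    {F : R[X]} (hF : F.Monic) (G : R[X]) :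
    Algebra.norm S (AdjoinRoot.mk (F.map φ) (G.map φ))
      = φ (Algebra.norm R (AdjoinRoot.mk F G)) := by
  classical
  have hFφ : (F.map φ).Monic := hF.map φ
  have hdeg : (F.map φ).natDegree = F.natDegree := hF.natDegree_map φ
  let e : Fin (F.map φ).natDegree ≃ Fin F.natDegree := finCongr hdeg
  let b := ((AdjoinRoot.powerBasis' hFφ).basis).reindex e
  rw [Algebra.norm_eq_matrix_det b,
    Algebra.norm_eq_matrix_det (AdjoinRoot.powerBasis' hF).basis, RingHom.map_det,
    RingHom.mapMatrix_apply]
  congr 1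
  ext i j
  have hbj : b j = AdjoinRoot.mk (F.map φ) (X ^ (j : ℕ)) := by
    show (AdjoinRoot.powerBasis' hFφ).basis.reindex e j = _
    erw [Module.Basis.reindex_apply]; rw [ PowerBasis.basis_eq_pow, AdjoinRoot.powerBasis'_gen,
      map_pow, AdjoinRoot.mk_X]
    rfl
  erw [Matrix.map_apply]
  erw [Algebra.leftMulMatrix_eq_repr_mul, Algebra.leftMulMatrix_eq_repr_mul, hbj]
  have hL : (AdjoinRoot.mk (F.map φ)) (G.map φ) * (AdjoinRoot.mk (F.map φ)) (X ^ (j:ℕ))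
      = AdjoinRoot.mk (F.map φ) (G.map φ * X ^ (j:ℕ)) := (map_mul _ _ _).symm
  erw [hL, Module.Basis.repr_reindex_apply]
  have hbR : (AdjoinRoot.powerBasis' hF).basis j
      = AdjoinRoot.mk F (X ^ (j : ℕ)) := by
    erw [PowerBasis.basis_eq_pow]; rw [AdjoinRoot.powerBasis'_gen, map_pow, AdjoinRoot.mk_X]
  erw [hbR]
  have hR : (AdjoinRoot.mk F) G * (AdjoinRoot.mk F) (X ^ (j:ℕ))
      = AdjoinRoot.mk F (G * X ^ (j:ℕ)) := (map_mul _ _ _).symm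
  rw [hR]
  have hb1 : (AdjoinRoot.powerBasis' hFφ).basis = AdjoinRoot.powerBasisAux' hFφ := rfl
  have hb2 : (AdjoinRoot.powerBasis' hF).basis = AdjoinRoot.powerBasisAux' hF := rfl
  rw [hb1, hb2]
  erw [AdjoinRoot.powerBasisAux'_repr_apply_to_fun, AdjoinRoot.powerBasisAux'_repr_apply_to_fun]
  rw [AdjoinRoot.modByMonicHom_mk, AdjoinRoot.modByMonicHom_mk]
  rw [← Polynomial.coeff_map, Polynomial.map_modByMonic φ hF, Polynomial.map_mul,
    Polynomial.map_pow, Polynomial.map_X]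
  rfl

/-- The resultant of two monic integer polynomials `F`, `G`, defined as the norm of the
image of `G` in `ℤ[T]/(F)`. -/
noncomputable def intResultant (F G : Polynomial ℤ) : ℤ :=
  Algebra.norm ℤ (AdjoinRoot.mk F G)

/-- Let `F, G ∈ ℤ[T]` be monic, coprime over `ℚ`, and let `d > 0` be a generator of the
ideal `(F, G) ∩ ℤ` of `ℤ`.  Then `d ∣ Res(F, G)`, and a prime `p` divides `d` if and only
if `p` divides `Res(F, G)`. -/
theorem generator_dvd_resultant_and_same_primes (F G : Polynomial ℤ) (hF : F.Monic)
    (hG : G.Monic)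
    (hcop : IsCoprime (F.map (Int.castRingHom ℚ)) (G.map (Int.castRingHom ℚ)))
    (d : ℤ) (hd : 0 < d)
    (hgen : ∀ n : ℤ, C n ∈ Ideal.span ({F, G} : Set (Polynomial ℤ)) ↔ d ∣ n) :
    d ∣ intResultant F G ∧
      ∀ p : ℤ, Prime p → (p ∣ d ↔ p ∣ intResultant F G) := by
  haveI : Module.Free ℤ (AdjoinRoot F) := Module.Free.of_basis (AdjoinRoot.powerBasis' hF).basis
  haveI : Module.Finite ℤ (AdjoinRoot F) :=
    Module.Finite.of_basis (AdjoinRoot.powerBasis' hF).basis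
  have hdvd1 : d ∣ intResultant F G := by
    obtain ⟨y, hy⟩ := dvd_algebraMap_norm' (R := ℤ) (AdjoinRoot.mk F G)
    obtain ⟨B, rfl⟩ := AdjoinRoot.mk_surjective y
    have hCmk : AdjoinRoot.mk F (C (intResultant F G))
        = algebraMap ℤ (AdjoinRoot F) (Algebra.norm ℤ (AdjoinRoot.mk F G)) :=
      DFunLike.congr_fun
        (Subsingleton.elim ((AdjoinRoot.mk F).comp C) (algebraMap ℤ (AdjoinRoot F))) _
    have h0 : AdjoinRoot.mk F (C (intResultant F G) - G * B) = 0 := by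
      rw [map_sub, map_mul, hCmk, hy, sub_self]
    obtain ⟨A, hA⟩ := AdjoinRoot.mk_eq_zero.mp h0
    refine (hgen _).mp (Ideal.mem_span_pair.mpr ⟨A, B, ?_⟩)
    linear_combination -hA
  refine ⟨hdvd1, fun p hp => ⟨fun h => h.trans hdvd1, fun hpres => ?_⟩⟩
  by_contra hpd
  set q := p.natAbs with hqdef
  have hq : Nat.Prime q := Int.prime_iff_natAbs_prime.mp hp
  haveI : Fact (Nat.Prime q) := ⟨hq⟩
  set φ := Int.castRingHom (ZMod q) with hφ
  have hnorm := norm_mk_map φ hF G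
  have hd0 : φ d ≠ 0 := by
    simp only [hφ, Int.coe_castRingHom, Ne, ZMod.intCast_zmod_eq_zero_iff_dvd]
    rw [Int.natAbs_dvd]
    exact hpd
  obtain ⟨A, B, hAB⟩ := Ideal.mem_span_pair.mp ((hgen d).mpr dvd_rfl)
  have hABq : A.map φ * F.map φ + B.map φ * G.map φ = C (φ d) := by
    have h := congrArg (Polynomial.map φ) hAB
    simpa only [Polynomial.map_add, Polynomial.map_mul, Polynomial.map_C] using h
  have hunit : IsUnit (AdjoinRoot.mk (F.map φ) (G.map φ)) := by
    have h2 := congrArg (AdjoinRoot.mk (F.map φ)) hABq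
    rw [map_add, map_mul, map_mul, AdjoinRoot.mk_self, mul_zero, zero_add] at h2
    have hu : IsUnit (AdjoinRoot.mk (F.map φ) (C (φ d))) := by
      have h3 : AdjoinRoot.mk (F.map φ) (C (φ d))
          = algebraMap (ZMod q) (AdjoinRoot (F.map φ)) (φ d) := by
        rw [AdjoinRoot.algebraMap_eq, AdjoinRoot.of]
        rfl
      rw [h3]
      exact (isUnit_iff_ne_zero.mpr hd0).map (algebraMap (ZMod q) (AdjoinRoot (F.map φ)))
    exact isUnit_of_mul_isUnit_right (h2 ▸ hu)
  have hires : IsUnit (φ (intResultant F G)) := by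
    rw [intResultant, ← hnorm]
    exact hunit.map (Algebra.norm (ZMod q))
  have hres0 : φ (intResultant F G) = 0 := by
    simp only [hφ, Int.coe_castRingHom, ZMod.intCast_zmod_eq_zero_iff_dvd]
    rw [Int.natAbs_dvd]
    exact hpres
  exact hires.ne_zero hres0
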